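/- Let G₁ and G₂ be finite simple graphs on disjoint vertex sets of orders n₁ and n₂. Then the boundary polynomial of the join G₁ + G₂ satisfies B(G₁+G₂;x,y) = B(K_{n₁+n₂};x,y) + x^{n₂}(B(G₁;x,y) − B(K_{n₁};x,y)) + x^{n₁}(B(G₂;x,y) − B(K_{n₂};x,y)). -/

import Mathlib

open Finset MvPolynomial

attribute [local instance] Classical.propDecidable

/-- The outer boundary of a vertex set `S`. -/
noncomputable def outerBoundary {V : Type*} [Fintype V] (G : SimpleGraph V) (S : Finset V) :
    Finset V :=
  Finset.univ.filter (fun v => v ∉ S ∧ ∃ u ∈ S, G.Adj u v)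

/-- The boundary polynomial `B(G;x,y)` with `x = X 0`, `y = X 1`. -/
noncomputable def boundaryPoly {V : Type*} [Fintype V] (G : SimpleGraph V) :
    MvPolynomial (Fin 2) ℤ :=
  ∑ S : Finset V, X 0 ^ (outerBoundary G S).card * X 1 ^ S.card

/-- The join of two simple graphs: disjoint union plus all edges across. -/
def joinGraph {V W : Type*} (G : SimpleGraph V) (H : SimpleGraph W) :
    SimpleGraph (V ⊕ W) where
  Adj x y := Sum.LiftRel G.Adj H.Adj x y ∨ (x.isLeft ∧ y.isRight) ∨ (x.isRight ∧ y.isLeft)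
  symm := .mk fun x y h => by
    rcases h with h | ⟨a, b⟩ | ⟨a, b⟩
    · cases h with
      | inl h => exact Or.inl (Sum.LiftRel.inl h.symm)
      | inr h => exact Or.inl (Sum.LiftRel.inr h.symm)
    · exact Or.inr (Or.inr ⟨b, a⟩)
    · exact Or.inr (Or.inl ⟨b, a⟩)
  loopless := .mk fun x h => by
    rcases h with h | ⟨a, b⟩ | ⟨a, b⟩
    · cases h with
      | inl h => exact h.ne rfl
      | inr h => exact h.ne rfl
    · cases x <;> simp_all
    · cases x <;> simp_all

lemma sum_complete {α : Type*} [Fintype α] :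
    ∑ S : Finset α, (X 0 : MvPolynomial (Fin 2) ℤ) ^ (Fintype.card α - S.card) * X 1 ^ S.card
      = (X 0 + X 1) ^ Fintype.card α := by
  have h := Finset.prod_add (fun _ : α => (X 1 : MvPolynomial (Fin 2) ℤ)) (fun _ => X 0)
      Finset.univ
  simp only [Finset.prod_const, Finset.powerset_univ, Finset.card_univ_diff,
    Finset.card_univ] at h
  rw [add_comm ((X 0 : MvPolynomial (Fin 2) ℤ)) (X 1), h]
  exact Finset.sum_congr rfl fun S _ => mul_comm _ _

lemma sum_kpoly {α : Type*} [Fintype α] :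
    ∑ S : Finset α, (if S = ∅ then 1 else
        (X 0 : MvPolynomial (Fin 2) ℤ) ^ (Fintype.card α - S.card) * X 1 ^ S.card)
      = (X 0 + X 1) ^ Fintype.card α + 1 - X 0 ^ Fintype.card α := by
  have key : ∀ S : Finset α, (if S = ∅ then (1 : MvPolynomial (Fin 2) ℤ) else
        X 0 ^ (Fintype.card α - S.card) * X 1 ^ S.card)
      = X 0 ^ (Fintype.card α - S.card) * X 1 ^ S.card
        + (if S = ∅ then 1 - X 0 ^ Fintype.card α else 0) := by
    intro S
    by_cases h : S = ∅
    · subst h; simp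
    · simp [h]
  rw [Finset.sum_congr rfl fun S _ => key S, Finset.sum_add_distrib, sum_complete,
    Finset.sum_ite_eq' Finset.univ (∅ : Finset α) (fun _ => 1 - X 0 ^ Fintype.card α)]
  simp
  ring

lemma outerBoundary_empty {V : Type*} [Fintype V] (G : SimpleGraph V) :
    outerBoundary G ∅ = ∅ := by simp [outerBoundary]

lemma outerBoundary_join {V W : Type*} [Fintype V] [Fintype W]
    (G : SimpleGraph V) (H : SimpleGraph W) (A : Finset V) (B : Finset W) :
    outerBoundary (joinGraph G H) (A.disjSum B) =
      (if B.Nonempty then Aᶜ else outerBoundary G A).disjSum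
      (if A.Nonempty then Bᶜ else outerBoundary H B) := by
  ext v
  cases v with
  | inl a =>
    simp only [outerBoundary, Finset.inl_mem_disjSum, Finset.mem_filter,
      Finset.mem_univ, true_and]
    constructor
    · rintro ⟨ha, u, hu, hadj⟩
      by_cases hB : B.Nonempty
      · simp [hB, ha]
      · simp only [hB, if_neg, if_false]
        rw [Finset.not_nonempty_iff_eq_empty] at hB
        subst hB
        simp only [Finset.disjSum_empty, Finset.mem_map] at hu
        obtain ⟨u', hu', rfl⟩ := hu
        rcases hadj with h | ⟨h1, h2⟩ | ⟨h1, h2⟩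
        · cases h with
          | inl h => simp only [Finset.mem_filter, Finset.mem_univ, true_and]
                     exact ⟨ha, u', hu', h⟩
        · simp at h2
        · simp at h1
    · intro hmem
      by_cases hB : B.Nonempty
      · simp only [hB, if_true, Finset.mem_compl] at hmem
        obtain ⟨b, hb⟩ := hB
        exact ⟨hmem, Sum.inr b, Finset.inr_mem_disjSum.2 hb, Or.inr (Or.inr ⟨rfl, rfl⟩)⟩
      · simp only [hB, if_false, Finset.mem_filter, Finset.mem_univ, true_and] at hmem
        obtain ⟨ha, u, hu, hadj⟩ := hmem
        exact ⟨ha, Sum.inl u, Finset.inl_mem_disjSum.2 hu, Or.inl (Sum.LiftRel.inl hadj)⟩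
  | inr b =>
    simp only [outerBoundary, Finset.inr_mem_disjSum, Finset.mem_filter,
      Finset.mem_univ, true_and]
    constructor
    · rintro ⟨hb, u, hu, hadj⟩
      by_cases hA : A.Nonempty
      · simp [hA, hb]
      · simp only [hA, if_neg, if_false]
        rw [Finset.not_nonempty_iff_eq_empty] at hA
        subst hA
        simp only [Finset.empty_disjSum, Finset.mem_map] at hu
        obtain ⟨u', hu', rfl⟩ := hu
        rcases hadj with h | ⟨h1, h2⟩ | ⟨h1, h2⟩
        · cases h with
          | inr h => simp only [Finset.mem_filter, Finset.mem_univ, true_and]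
                     exact ⟨hb, u', hu', h⟩
        · simp at h1
        · simp at h2
    · intro hmem
      by_cases hA : A.Nonempty
      · simp only [hA, if_true, Finset.mem_compl] at hmem
        obtain ⟨a, ha⟩ := hA
        exact ⟨hmem, Sum.inl a, Finset.inl_mem_disjSum.2 ha, Or.inr (Or.inl ⟨rfl, rfl⟩)⟩
      · simp only [hA, if_false, Finset.mem_filter, Finset.mem_univ, true_and] at hmem
        obtain ⟨hb, u, hu, hadj⟩ := hmem
        exact ⟨hb, Sum.inr u, Finset.inr_mem_disjSum.2 hu, Or.inl (Sum.LiftRel.inr hadj)⟩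

lemma sumFinsetSum {α β M : Type*} [Fintype α] [Fintype β] [AddCommMonoid M]
    (f : Finset (α ⊕ β) → M) :
    ∑ S : Finset (α ⊕ β), f S = ∑ A : Finset α, ∑ B : Finset β, f (A.disjSum B) := by
  rw [← Equiv.sum_comp (show (Finset α × Finset β) ≃ Finset (α ⊕ β) from
      ⟨fun p => p.1.disjSum p.2, fun S => (S.toLeft, S.toRight), fun p => by simp,
        fun S => Finset.toLeft_disjSum_toRight⟩) f, Fintype.sum_prod_type]
  rfl

lemma card_outerBoundary_join {V W : Type*} [Fintype V] [Fintype W]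
    (G : SimpleGraph V) (H : SimpleGraph W) (A : Finset V) (B : Finset W) :
    (outerBoundary (joinGraph G H) (A.disjSum B)).card =
      (if B.Nonempty then Fintype.card V - A.card else (outerBoundary G A).card)
      + (if A.Nonempty then Fintype.card W - B.card else (outerBoundary H B).card) := by
  rw [outerBoundary_join, Finset.card_disjSum, apply_ite Finset.card,
    apply_ite Finset.card, Finset.card_compl, Finset.card_compl]

/-- Boundary polynomial of the join of two graphs. -/
theorem boundaryPoly_join {V W : Type*} [Fintype V] [Fintype W]
    (G : SimpleGraph V) (H : SimpleGraph W) :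
    boundaryPoly (joinGraph G H) =
      ((X 0 + X 1) ^ (Fintype.card V + Fintype.card W) + 1
          - (X 0 : MvPolynomial (Fin 2) ℤ) ^ (Fintype.card V + Fintype.card W))
      + X 0 ^ Fintype.card W *
          (boundaryPoly G - ((X 0 + X 1) ^ Fintype.card V + 1 - X 0 ^ Fintype.card V))
      + X 0 ^ Fintype.card V *
          (boundaryPoly H - ((X 0 + X 1) ^ Fintype.card W + 1 - X 0 ^ Fintype.card W)) := by
  classical
  set n₁ := Fintype.card V with hn₁
  set n₂ := Fintype.card W with hn₂
  have hsum : boundaryPoly (joinGraph G H)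
      = ∑ A : Finset V, ∑ B : Finset W,
          (X 0 : MvPolynomial (Fin 2) ℤ)
              ^ (outerBoundary (joinGraph G H) (A.disjSum B)).card
            * X 1 ^ (A.card + B.card) := by
    rw [boundaryPoly, sumFinsetSum]
    simp only [Finset.card_disjSum]
  have key : ∀ (A : Finset V) (B : Finset W),
      (X 0 : MvPolynomial (Fin 2) ℤ)
          ^ (outerBoundary (joinGraph G H) (A.disjSum B)).card
        * X 1 ^ (A.card + B.card)
      = (if A = ∅ ∧ B = ∅ then 1
          else X 0 ^ ((n₁ - A.card) + (n₂ - B.card)) * X 1 ^ (A.card + B.card))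
        + (if B = ∅ then X 0 ^ n₂ * (X 0 ^ (outerBoundary G A).card * X 1 ^ A.card
              - (if A = ∅ then 1 else X 0 ^ (n₁ - A.card) * X 1 ^ A.card)) else 0)
        + (if A = ∅ then X 0 ^ n₁ * (X 0 ^ (outerBoundary H B).card * X 1 ^ B.card
              - (if B = ∅ then 1 else X 0 ^ (n₂ - B.card) * X 1 ^ B.card)) else 0) := by
    intro A B
    rw [card_outerBoundary_join]
    split_ifs <;>
      simp_all [Finset.nonempty_iff_ne_empty, outerBoundary_empty] <;>
      ring
  rw [hsum, Finset.sum_congr rfl fun A _ => Finset.sum_congr rfl fun B _ => key A B]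
  simp only [Finset.sum_add_distrib]
  have hS1 : (∑ A : Finset V, ∑ B : Finset W,
      (if A = ∅ ∧ B = ∅ then (1 : MvPolynomial (Fin 2) ℤ)
        else X 0 ^ ((n₁ - A.card) + (n₂ - B.card)) * X 1 ^ (A.card + B.card)))
      = (X 0 + X 1) ^ (n₁ + n₂) + 1 - X 0 ^ (n₁ + n₂) := by
    have h := sum_kpoly (α := V ⊕ W)
    rw [sumFinsetSum, Fintype.card_sum] at h
    rw [← h]
    refine Finset.sum_congr rfl fun A _ => Finset.sum_congr rfl fun B _ => ?_
    have h1 : A.card ≤ n₁ := Finset.card_le_univ A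
    have h2 : B.card ≤ n₂ := Finset.card_le_univ B
    have hc : n₁ + n₂ - (A.card + B.card) = (n₁ - A.card) + (n₂ - B.card) := by omega
    simp only [Finset.disjSum_eq_empty, Finset.card_disjSum, ← hn₁, ← hn₂, hc]
  have hS2 : (∑ A : Finset V, ∑ B : Finset W,
      (if B = ∅ then X 0 ^ n₂ * (X 0 ^ (outerBoundary G A).card * X 1 ^ A.card
          - (if A = ∅ then 1 else (X 0 : MvPolynomial (Fin 2) ℤ) ^ (n₁ - A.card) * X 1 ^ A.card))
        else 0))
      = X 0 ^ n₂ * (boundaryPoly G - ((X 0 + X 1) ^ n₁ + 1 - X 0 ^ n₁)) := by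
    have inner : ∀ A : Finset V, (∑ B : Finset W,
        (if B = ∅ then X 0 ^ n₂ * (X 0 ^ (outerBoundary G A).card * X 1 ^ A.card
            - (if A = ∅ then 1 else (X 0 : MvPolynomial (Fin 2) ℤ) ^ (n₁ - A.card) * X 1 ^ A.card))
          else 0))
        = X 0 ^ n₂ * (X 0 ^ (outerBoundary G A).card * X 1 ^ A.card
            - (if A = ∅ then 1 else X 0 ^ (n₁ - A.card) * X 1 ^ A.card)) := by
      intro A
      rw [Finset.sum_ite_eq' Finset.univ (∅ : Finset W)]
      simp
    rw [Finset.sum_congr rfl fun A _ => inner A, ← Finset.mul_sum,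
      Finset.sum_sub_distrib, sum_kpoly, boundaryPoly]
  have hS3 : (∑ A : Finset V, ∑ B : Finset W,
      (if A = ∅ then X 0 ^ n₁ * (X 0 ^ (outerBoundary H B).card * X 1 ^ B.card
          - (if B = ∅ then 1 else (X 0 : MvPolynomial (Fin 2) ℤ) ^ (n₂ - B.card) * X 1 ^ B.card))
        else 0))
      = X 0 ^ n₁ * (boundaryPoly H - ((X 0 + X 1) ^ n₂ + 1 - X 0 ^ n₂)) := by
    have inner : ∀ A : Finset V, (∑ B : Finset W,
        (if A = ∅ then X 0 ^ n₁ * (X 0 ^ (outerBoundary H B).card * X 1 ^ B.card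
            - (if B = ∅ then 1 else (X 0 : MvPolynomial (Fin 2) ℤ) ^ (n₂ - B.card) * X 1 ^ B.card))
          else 0))
        = (if A = ∅ then X 0 ^ n₁ * (boundaryPoly H - ((X 0 + X 1) ^ n₂ + 1 - X 0 ^ n₂)) else 0) := by
      intro A
      split_ifs with h
      · rw [← Finset.mul_sum, Finset.sum_sub_distrib, sum_kpoly, boundaryPoly]
      · simp
    rw [Finset.sum_congr rfl fun A _ => inner A,
      Finset.sum_ite_eq' Finset.univ (∅ : Finset V)]
    simp
  rw [hS1, hS2, hS3]
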